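/- For any family Ω of subsets of a finite set Δ, C(Ω̂) ⊆ Ω^c, i.e., the cut system of the element-complement family is contained in the complement of Ω within the power set of Δ; moreover equality holds if and only if Ω is lower-closed. -/

import Mathlib

open Finset

variable {α : Type*} [Fintype α] [DecidableEq α]

def UpperClosed (Ω : Set (Finset α)) : Prop :=
  ∀ ⦃T : Finset α⦄, T ∈ Ω → ∀ ⦃T' : Finset α⦄, T ⊆ T' → T' ∈ Ω

def LowerClosed (Ω : Set (Finset α)) : Prop :=
  ∀ ⦃T : Finset α⦄, T ∈ Ω → ∀ ⦃T' : Finset α⦄, T' ⊆ T → T' ∈ Ω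

def upC (Ω : Set (Finset α)) : Set (Finset α) := {T | ∃ T' ∈ Ω, T' ⊆ T}

def downC (Ω : Set (Finset α)) : Set (Finset α) := {T | ∃ T' ∈ Ω, T ⊆ T'}

def cutOp (Ω : Set (Finset α)) : Set (Finset α) := {S | ∀ T ∈ Ω, S ∩ T ≠ ∅}

def cocutOp (Ω : Set (Finset α)) : Set (Finset α) := {S | ∀ T ∈ Ω, S ∪ T ≠ Finset.univ}

def hatOp (Ω : Set (Finset α)) : Set (Finset α) := (fun T => Tᶜ) '' Ω

def minOp (Ω : Set (Finset α)) : Set (Finset α) :=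
  {T ∈ Ω | ∀ T' ∈ Ω, T' ⊆ T → T' = T}

lemma inter_compl_eq_empty_iff (S T : Finset α) : S ∩ Tᶜ = ∅ ↔ S ⊆ T := by
  rw [← Finset.disjoint_iff_inter_eq_empty, disjoint_compl_right_iff]

lemma mem_cut_hat_iff (Ω : Set (Finset α)) (S : Finset α) :
    S ∈ cutOp (hatOp Ω) ↔ ∀ T ∈ Ω, ¬ S ⊆ T := by
  constructor
  · intro h T hT hST
    exact h Tᶜ ⟨T, hT, rfl⟩ ((inter_compl_eq_empty_iff S T).2 hST)
  · rintro h U ⟨T, hT, rfl⟩ hc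
    exact h T hT ((inter_compl_eq_empty_iff S T).1 hc)

theorem stmt15 (Ω : Set (Finset α)) :
    cutOp (hatOp Ω) ⊆ Ωᶜ ∧ (cutOp (hatOp Ω) = Ωᶜ ↔ LowerClosed Ω) := by
  have hsub : cutOp (hatOp Ω) ⊆ Ωᶜ := by
    intro S hS hSΩ
    exact (mem_cut_hat_iff Ω S).1 hS S hSΩ (subset_refl S)
  refine ⟨hsub, ?_, ?_⟩
  · intro heq T hT T' hT'
    by_contra h
    have : T' ∈ cutOp (hatOp Ω) := heq ▸ h
    exact (mem_cut_hat_iff Ω T').1 this T hT hT'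
  · intro hLC
    refine Set.Subset.antisymm hsub ?_
    intro S hS
    exact (mem_cut_hat_iff Ω S).2 fun T hT hST => hS (hLC hT hST)
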